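/- For distinct points m⁺, m⁻ on the parabola m₂ = m₁²/2, the jump cost (Σ(m⁺) − Σ(m⁻))·n = |m₁⁺ − m₁⁻|³ / (12√(1 + (1/4)(m₁⁺ + m₁⁻)²)) is strictly positive. -/
import Mathlib


/-- The jump cost (Σ(m⁺) − Σ(m⁻))·n equals
|m₁⁺ − m₁⁻|³/(12√(1 + (1/4)(m₁⁺ + m₁⁻)²)) and is strictly positive. -/
theorem stmt_5 (mp1 mp2 mm1 mm2 p1 p2 n1 n2 : ℝ)
    (hparp : mp2 = mp1 ^ 2 / 2) (hparm : mm2 = mm1 ^ 2 / 2)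
    (hne : (mp1, mp2) ≠ (mm1, mm2))
    (hp1 : p1 = mp1 - mm1) (hp2 : p2 = mp2 - mm2)
    (hn1 : n1 = p1 / Real.sqrt (p1 ^ 2 + p2 ^ 2))
    (hn2 : n2 = p2 / Real.sqrt (p1 ^ 2 + p2 ^ 2)) :
    ((mp1 * mp2 - mp1 ^ 3 / 6) - (mm1 * mm2 - mm1 ^ 3 / 6)) * n1
        + ((-(mp1 ^ 2) / 2) - (-(mm1 ^ 2) / 2)) * n2
      = |mp1 - mm1| ^ 3 / (12 * Real.sqrt (1 + (1 / 4) * (mp1 + mm1) ^ 2))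
    ∧ 0 < ((mp1 * mp2 - mp1 ^ 3 / 6) - (mm1 * mm2 - mm1 ^ 3 / 6)) * n1
        + ((-(mp1 ^ 2) / 2) - (-(mm1 ^ 2) / 2)) * n2 := by
  subst hparp hparm hp1 hp2 hn1 hn2
  set d := mp1 - mm1 with hd_def
  have hd : d ≠ 0 := by
    intro h
    apply hne
    have h1 : mp1 = mm1 := by rw [hd_def] at h; linarith
    rw [h1]
  have hdabs : 0 < |d| := abs_pos.mpr hd
  set q := 1 + (1 / 4) * (mp1 + mm1) ^ 2 with hq_def
  have hq : 0 < q := by positivity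
  have hsqrtq : 0 < Real.sqrt q := Real.sqrt_pos.mpr hq
  have hsq : (mp1 - mm1) ^ 2 + (mp1 ^ 2 / 2 - mm1 ^ 2 / 2) ^ 2 = d ^ 2 * q := by
    rw [hd_def, hq_def]; ring
  have hroot : Real.sqrt ((mp1 - mm1) ^ 2 + (mp1 ^ 2 / 2 - mm1 ^ 2 / 2) ^ 2)
      = |d| * Real.sqrt q := by
    rw [hsq, Real.sqrt_mul (sq_nonneg d), Real.sqrt_sq_eq_abs]
  have habs4 : |d| ^ 4 = d ^ 4 := by
    rw [← abs_pow]; exact abs_of_nonneg (by positivity)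
  have key : ((mp1 * (mp1 ^ 2 / 2) - mp1 ^ 3 / 6) - (mm1 * (mm1 ^ 2 / 2) - mm1 ^ 3 / 6)) *
        ((mp1 - mm1) / Real.sqrt ((mp1 - mm1) ^ 2 + (mp1 ^ 2 / 2 - mm1 ^ 2 / 2) ^ 2))
        + ((-(mp1 ^ 2) / 2) - (-(mm1 ^ 2) / 2)) *
        ((mp1 ^ 2 / 2 - mm1 ^ 2 / 2) / Real.sqrt ((mp1 - mm1) ^ 2 + (mp1 ^ 2 / 2 - mm1 ^ 2 / 2) ^ 2))
      = |d| ^ 3 / (12 * Real.sqrt q) := by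
    rw [hroot]
    have comb : ∀ A B x y S : ℝ, A * (x / S) + B * (y / S) = (A * x + B * y) / S := by
      intros; ring
    rw [comb]
    have : (mp1 * (mp1 ^ 2 / 2) - mp1 ^ 3 / 6 - (mm1 * (mm1 ^ 2 / 2) - mm1 ^ 3 / 6)) * (mp1 - mm1)
        + (-(mp1 ^ 2) / 2 - -(mm1 ^ 2) / 2) * (mp1 ^ 2 / 2 - mm1 ^ 2 / 2) = d ^ 4 / 12 := by
      rw [hd_def]; ring
    rw [this, ← habs4, div_eq_div_iff (by positivity) (by positivity)]
    ring
  refine ⟨key, key ▸ by positivity⟩
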